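/- Let (Ω, 𝓕, μ) be a standard Borel probability space, T : Ω → ℝ measurable, E a standard Borel space, X : Ω → E measurable, L > 0 fixed, and H : E → (ℝ → ℝ≥0) with (x,s) ↦ H(x)(s) jointly measurable. Assume that for (μ.map X)-almost every x, the regular conditional distribution of T given X = x is absolutely continuous with respect to Lebesgue measure with density t ↦ 1_{[0,∞)}(t) · H(x)(t) · exp(−∫₀ᵗ H(x)(s) ds). Then for every t ∈ [0, L), defining the propensity process Θ_t : Ω → (ℝ → ℝ≥0) by Θ_t(ω)(s) = H(X(ω))(s) for s ∈ [0, t) and Θ_t(ω)(s) = 0 for s ∉ [0, t), the restricted treatment time U_t = min(T, t) is conditionally independent of X given the σ-algebra generated by Θ_t. -/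

import Mathlib

open MeasureTheory ProbabilityTheory

open scoped ENNReal

section Aux

/-- If `h` is measurable w.r.t. a sub-σ-algebra `m'`, then the conditional-expectation kernel
for `m'` is a.e. concentrated on the level sets of `h`. -/
private lemma levelset_ae_condexpKernel {E : Type*} {m' : MeasurableSpace E}
    [mE : MeasurableSpace E] [StandardBorelSpace E] [Nonempty E]
    (ν : Measure E) [IsProbabilityMeasure ν]
    (hm' : m' ≤ mE) {h : E → NNReal} (hh : Measurable[m'] h) :
    ∀ᵐ x ∂ν, (condExpKernel ν m' x) {y | h y ≠ h x} = 0 := by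
  have hmeas : Measurable h := hh.mono hm' le_rfl
  have hcoe : Measurable[m'] fun z => (h z : ℝ) := measurable_coe_nnreal_real.comp hh
  have hcoe_amb : Measurable fun z => (h z : ℝ) := measurable_coe_nnreal_real.comp hmeas
  have hAq : ∀ q : ℚ, MeasurableSet[m'] {z | (h z : ℝ) ≤ (q : ℝ)} := fun q =>
    hcoe measurableSet_Iic
  have hAq_amb : ∀ q : ℚ, MeasurableSet {z | (h z : ℝ) ≤ (q : ℝ)} := fun q =>
    hcoe_amb measurableSet_Iic
  have key : ∀ᵐ x ∂ν, ∀ q : ℚ,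
      (condExpKernel ν m' x) {z | (h z : ℝ) ≤ (q : ℝ)}
        = Set.indicator {z | (h z : ℝ) ≤ (q : ℝ)} (fun _ => (1 : ℝ≥0∞)) x := by
    rw [ae_all_iff]
    intro q
    have h1 := condExpKernel_ae_eq_condExp (μ := ν) hm' (hAq_amb q)
    have h2 : ν[Set.indicator {z | (h z : ℝ) ≤ (q : ℝ)} (fun _ => (1 : ℝ)) | m']
        = Set.indicator {z | (h z : ℝ) ≤ (q : ℝ)} (fun _ => (1 : ℝ)) :=
      condExp_of_stronglyMeasurable hm'
        (stronglyMeasurable_const.indicator (hAq q))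
        ((integrable_const (1 : ℝ)).indicator (hAq_amb q))
    rw [h2] at h1
    filter_upwards [h1] with x hx
    by_cases hxq : x ∈ {z | (h z : ℝ) ≤ (q : ℝ)}
    · rw [Set.indicator_of_mem hxq] at hx ⊢
      exact (ENNReal.toReal_eq_one_iff _).mp hx
    · rw [Set.indicator_of_notMem hxq] at hx ⊢
      rcases (ENNReal.toReal_eq_zero_iff _).mp hx with h0 | htop
      · exact h0
      · exact absurd htop (measure_ne_top _ _)
  filter_upwards [key] with x hxq
  haveI : IsProbabilityMeasure (condExpKernel ν m' x) :=
    IsMarkovKernel.isProbabilityMeasure x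
  -- each "bad" set is null
  have hbad1 : ∀ q : ℚ,
      (condExpKernel ν m' x) {y | (h x : ℝ) ≤ (q : ℝ) ∧ ¬ (h y : ℝ) ≤ (q : ℝ)} = 0 := by
    intro q
    by_cases hc : (h x : ℝ) ≤ (q : ℝ)
    · refine measure_mono_null (t := {z | (h z : ℝ) ≤ (q : ℝ)}ᶜ)
        (fun y hy => (Set.mem_compl_iff _ _).mpr hy.2) ?_
      rw [measure_compl (hAq_amb q) (measure_ne_top _ _), measure_univ]
      have hcmem : x ∈ {z : E | (h z : ℝ) ≤ (q : ℝ)} := hc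
      rw [hxq q, Set.indicator_of_mem hcmem]
      simp
    · have : {y | (h x : ℝ) ≤ (q : ℝ) ∧ ¬ (h y : ℝ) ≤ (q : ℝ)} = (∅ : Set E) := by
        ext y; simp only [Set.mem_setOf_eq, Set.mem_empty_iff_false, iff_false]
        exact fun hy => hc hy.1
      rw [this]; exact measure_empty
  have hbad2 : ∀ q : ℚ,
      (condExpKernel ν m' x) {y | (q : ℝ) < (h x : ℝ) ∧ (h y : ℝ) ≤ (q : ℝ)} = 0 := by
    intro q
    by_cases hc : (q : ℝ) < (h x : ℝ)
    · refine measure_mono_null (t := {z | (h z : ℝ) ≤ (q : ℝ)})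
        (fun y hy => hy.2) ?_
      have hcmem : x ∉ {z : E | (h z : ℝ) ≤ (q : ℝ)} := fun hmem => (not_le.mpr hc) hmem
      rw [hxq q, Set.indicator_of_notMem hcmem]
    · have : {y | (q : ℝ) < (h x : ℝ) ∧ (h y : ℝ) ≤ (q : ℝ)} = (∅ : Set E) := by
        ext y; simp only [Set.mem_setOf_eq, Set.mem_empty_iff_false, iff_false]
        exact fun hy => hc hy.1
      rw [this]; exact measure_empty
  refine measure_mono_null (fun y hy => ?_)
    (measure_union_null
      (measure_iUnion_null fun q : ℚ => hbad1 q)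
      (measure_iUnion_null fun q : ℚ => hbad2 q))
  have hy' : (h y : ℝ) ≠ (h x : ℝ) := by
    simp only [Set.mem_setOf_eq] at hy
    exact_mod_cast hy
  rcases lt_or_gt_of_ne hy' with hlt | hgt
  · obtain ⟨q, hq1, hq2⟩ := exists_rat_btwn hlt
    exact Or.inr (Set.mem_iUnion.mpr ⟨q, hq2, le_of_lt hq1⟩)
  · obtain ⟨q, hq1, hq2⟩ := exists_rat_btwn hgt
    exact Or.inl (Set.mem_iUnion.mpr ⟨q, le_of_lt hq1, not_le.mpr hq2⟩)

/-- The conditional-expectation kernel associated with the σ-algebra generated by a jointly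
measurable family of paths is a.e. concentrated on the a.e.-equivalence class of the path. -/
private lemma paths_ae_condexpKernel {E : Type*} {m' : MeasurableSpace E}
    [mE : MeasurableSpace E] [StandardBorelSpace E] [Nonempty E]
    (ν : Measure E) [IsProbabilityMeasure ν]
    (φ : E → ℝ → NNReal) (hφ : Measurable fun p : E × ℝ => φ p.1 p.2)
    (hm'eq : m' = MeasurableSpace.comap φ inferInstance) :
    ∀ᵐ x ∂ν, ∀ᵐ y ∂(condExpKernel ν m' x),
      ∀ᵐ s ∂(volume : Measure ℝ), φ y s = φ x s := by
  have hφm' : Measurable[m'] φ := by rw [hm'eq]; exact Measurable.of_comap_le le_rfl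
  have hφpi : Measurable φ :=
    measurable_pi_lambda _ fun s => hφ.comp measurable_prodMk_right
  have hm' : m' ≤ mE := by rw [hm'eq]; exact hφpi.comap_le
  set κ' : Kernel E E := Kernel.comap (condExpKernel ν m') id (measurable_id'' hm')
    with hκ'def
  haveI : IsMarkovKernel κ' := by rw [hκ'def]; infer_instance
  have hκ'app : ∀ x, κ' x = condExpKernel ν m' x := fun x => by
    rw [hκ'def, Kernel.comap_apply]; rfl
  -- the measurable "disagreement" set
  have hW : MeasurableSet {z : (E × E) × ℝ | φ z.1.2 z.2 = φ z.1.1 z.2} :=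
    MeasureTheory.StronglyMeasurable.measurableSet_eq_fun
      (hφ.comp ((measurable_snd.comp measurable_fst).prodMk measurable_snd)).stronglyMeasurable
      (hφ.comp ((measurable_fst.comp measurable_fst).prodMk measurable_snd)).stronglyMeasurable
  have hWne : MeasurableSet {z : (E × E) × ℝ | φ z.1.2 z.2 ≠ φ z.1.1 z.2} := by
    have heq : {z : (E × E) × ℝ | φ z.1.2 z.2 ≠ φ z.1.1 z.2}
        = {z : (E × E) × ℝ | φ z.1.2 z.2 = φ z.1.1 z.2}ᶜ := rfl
    rw [heq]; exact hW.compl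
  set F : (E × E) × ℝ → ℝ≥0∞ :=
    fun z => Set.indicator {z : (E × E) × ℝ | φ z.1.2 z.2 ≠ φ z.1.1 z.2}
      (fun _ => (1 : ℝ≥0∞)) z with hFdef
  have hF : Measurable F := measurable_const.indicator hWne
  have hsec : ∀ p : E × E, MeasurableSet {s : ℝ | φ p.2 s ≠ φ p.1 s} := fun p =>
    measurable_prodMk_left hWne
  have hFsec : ∀ p : E × E, (fun s => F (p, s))
      = Set.indicator {s : ℝ | φ p.2 s ≠ φ p.1 s} (fun _ => (1 : ℝ≥0∞)) := by
    intro p; funext s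
    simp only [hFdef, Set.indicator_apply, Set.mem_setOf_eq]
  have hD : ∀ p : E × E, ∫⁻ s, F (p, s) ∂(volume : Measure ℝ)
      = volume {s : ℝ | φ p.2 s ≠ φ p.1 s} := by
    intro p
    rw [hFsec p, lintegral_indicator (hsec p)]
    exact setLIntegral_one _
  set M : Measure (E × E) := ν.compProd κ' with hMdef
  have hIzero : ∫⁻ p, (∫⁻ s, F (p, s) ∂(volume : Measure ℝ)) ∂M = 0 := by
    rw [lintegral_lintegral_swap hF.aemeasurable]
    have hzero : ∀ s : ℝ, ∫⁻ p, F (p, s) ∂M = 0 := by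
      intro s
      have hFs : Measurable fun p : E × E => F (p, s) := hF.comp measurable_prodMk_right
      rw [hMdef, Measure.lintegral_compProd hFs]
      have hys : ∀ x : E, MeasurableSet {y : E | φ y s ≠ φ x s} := by
        intro x
        have hmeasy : Measurable fun y : E => φ y s :=
          hφ.comp measurable_prodMk_right
        have h1 : MeasurableSet {y : E | φ y s = φ x s} :=
          MeasureTheory.StronglyMeasurable.measurableSet_eq_fun hmeasy.stronglyMeasurable
            stronglyMeasurable_const
        have h2 : {y : E | φ y s ≠ φ x s} = {y : E | φ y s = φ x s}ᶜ := rfl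
        rw [h2]; exact h1.compl
      have hinner : ∀ x : E, ∫⁻ y, F ((x, y), s) ∂(κ' x) = κ' x {y : E | φ y s ≠ φ x s} := by
        intro x
        have heq : (fun y => F ((x, y), s))
            = Set.indicator {y : E | φ y s ≠ φ x s} (fun _ => (1 : ℝ≥0∞)) := by
          funext y
          simp only [hFdef, Set.indicator_apply, Set.mem_setOf_eq]
        rw [heq, lintegral_indicator (hys x)]
        exact setLIntegral_one _
      have hlev := levelset_ae_condexpKernel ν hm'
        (h := fun x => φ x s) ((measurable_pi_apply s).comp hφm')
      calc ∫⁻ x, (∫⁻ y, F ((x, y), s) ∂(κ' x)) ∂ν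
          = ∫⁻ x, κ' x {y : E | φ y s ≠ φ x s} ∂ν := lintegral_congr fun x => hinner x
        _ = ∫⁻ _, (0 : ℝ≥0∞) ∂ν := by
            refine lintegral_congr_ae ?_
            filter_upwards [hlev] with x hx
            rw [hκ'app x]
            exact hx
        _ = 0 := by simp
    calc ∫⁻ s, (∫⁻ p, F (p, s) ∂M) ∂(volume : Measure ℝ)
        = ∫⁻ _, (0 : ℝ≥0∞) ∂(volume : Measure ℝ) := lintegral_congr hzero
      _ = 0 := by simp
  have hDmeas : Measurable fun p : E × E => ∫⁻ s, F (p, s) ∂(volume : Measure ℝ) :=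
    Measurable.lintegral_prod_right' hF
  have hae : ∀ᵐ p ∂M, ∫⁻ s, F (p, s) ∂(volume : Measure ℝ) = 0 :=
    (lintegral_eq_zero_iff hDmeas).mp hIzero
  have hae2 := Measure.ae_ae_of_ae_compProd (hMdef ▸ hae)
  filter_upwards [hae2] with x hx
  rw [← hκ'app x]
  filter_upwards [hx] with y hy
  rw [hD (x, y)] at hy
  exact ae_iff.mpr hy

/-- Main auxiliary lemma: the conditional independence statement, with the two σ-algebras
abstracted. -/
private lemma helper {Ω E : Type*} {mst : MeasurableSpace Ω} {m' : MeasurableSpace E}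
    [mΩ : MeasurableSpace Ω] [StandardBorelSpace Ω] [Nonempty Ω]
    [mE : MeasurableSpace E] [StandardBorelSpace E]
    (μ : Measure Ω) [IsProbabilityMeasure μ]
    (T : Ω → ℝ) (X : Ω → E) (hT : Measurable T) (hX : Measurable X) (t : ℝ)
    (H : E → ℝ → NNReal) (hH : Measurable fun p : E × ℝ => H p.1 p.2)
    (hdens : ∀ᵐ x ∂(μ.map X), condDistrib T X μ x =
      volume.withDensity fun u : ℝ =>
        Set.indicator (Set.Ici (0 : ℝ))
          (fun v => ENNReal.ofReal
            ((H x v : ℝ) * Real.exp (-∫ s in (0 : ℝ)..v, (H x s : ℝ)))) u)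
    (hm'eq : m' = MeasurableSpace.comap
      (fun x => fun s : ℝ => if s ∈ Set.Ico (0 : ℝ) t then H x s else 0) inferInstance)
    (hmst : mst = MeasurableSpace.comap X m')
    (hm2 : mst ≤ mΩ) :
    CondIndepFun mst hm2 (fun ω => min (T ω) t) X μ := by
  classical
  haveI : Nonempty E := ⟨X (Classical.arbitrary Ω)⟩
  set φ : E → ℝ → NNReal := fun x s => if s ∈ Set.Ico (0 : ℝ) t then H x s else 0 with hφdef
  have hφj : Measurable fun p : E × ℝ => φ p.1 p.2 :=
    Measurable.ite (measurable_snd measurableSet_Ico) hH measurable_const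
  have hφpi : Measurable φ :=
    measurable_pi_lambda _ fun s => hφj.comp measurable_prodMk_right
  have hm'le : m' ≤ mE := by rw [hm'eq]; exact hφpi.comap_le
  set ν : Measure E := μ.map X with hνdef
  haveI : IsProbabilityMeasure ν := Measure.isProbabilityMeasure_map hX.aemeasurable
  rw [condIndepFun_iff_condExp_inter_preimage_eq_mul (hT.min measurable_const) hX]
  intro s' τ hs' hτ
  set S : Set ℝ := (fun u => min u t) ⁻¹' s' with hSdef
  have hS : MeasurableSet S := (measurable_id.min measurable_const) hs'
  -- the density written with a jointly measurable primitive
  set G' : E → ℝ → ℝ :=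
    fun x v => ∫ s, Set.indicator (Set.Ioc (0 : ℝ) v) (fun u => (H x u : ℝ)) s ∂volume
    with hG'def
  have hG'meas : Measurable fun p : E × ℝ => G' p.1 p.2 := by
    have hsm : StronglyMeasurable fun q : (E × ℝ) × ℝ =>
        Set.indicator (Set.Ioc (0 : ℝ) q.1.2) (fun u => (H q.1.1 u : ℝ)) q.2 := by
      have heq : (fun q : (E × ℝ) × ℝ =>
          Set.indicator (Set.Ioc (0 : ℝ) q.1.2) (fun u => (H q.1.1 u : ℝ)) q.2)
          = fun q : (E × ℝ) × ℝ => if 0 < q.2 ∧ q.2 ≤ q.1.2 then (H q.1.1 q.2 : ℝ) else 0 := by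
        funext q; simp [Set.indicator_apply, Set.mem_Ioc]
      rw [heq]
      refine Measurable.stronglyMeasurable ?_
      refine Measurable.ite ?_ ?_ measurable_const
      · exact MeasurableSet.inter
          (measurableSet_lt measurable_const measurable_snd)
          (measurableSet_le measurable_snd (measurable_snd.comp measurable_fst))
      · exact measurable_coe_nnreal_real.comp
          (hH.comp ((measurable_fst.comp measurable_fst).prodMk measurable_snd))
    exact hsm.integral_prod_right'.measurable
  set dB : E → ℝ → ℝ≥0∞ := fun x u =>
    Set.indicator (Set.Ici (0 : ℝ))
      (fun v => ENNReal.ofReal ((H x v : ℝ) * Real.exp (-(G' x v)))) u with hdBdef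
  have hdBj : Measurable fun p : E × ℝ => dB p.1 p.2 := by
    have heq : (fun p : E × ℝ => dB p.1 p.2)
        = fun p : E × ℝ => if 0 ≤ p.2 then
            ENNReal.ofReal ((H p.1 p.2 : ℝ) * Real.exp (-(G' p.1 p.2))) else 0 := by
      funext p; simp [hdBdef, Set.indicator_apply, Set.mem_Ici]
    rw [heq]
    refine Measurable.ite (measurableSet_le measurable_const measurable_snd) ?_ measurable_const
    exact ENNReal.measurable_ofReal.comp
      ((measurable_coe_nnreal_real.comp hH).mul
        ((Real.measurable_exp.comp hG'meas.neg)))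
  set Q1 : Set ℝ := S ∩ Set.Iio t with hQ1def
  have hQ1 : MeasurableSet Q1 := hS.inter measurableSet_Iio
  set c : ℝ≥0∞ := Set.indicator s' (fun _ => (1 : ℝ≥0∞)) t with hcdef
  set B : E → ℝ≥0∞ :=
    fun x => (∫⁻ u in Q1, dB x u) + c * (1 - ∫⁻ u in Set.Iio t, dB x u) with hBdef
  have hBmeas : Measurable B := by
    refine Measurable.add ?_ (Measurable.const_mul ?_ c)
    · exact Measurable.lintegral_prod_right' (ν := volume.restrict Q1) hdBj
    · exact Measurable.sub measurable_const
        (Measurable.lintegral_prod_right' (ν := volume.restrict (Set.Iio t)) hdBj)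
  set ρ : E → ℝ≥0∞ := fun x => min (B x) 1 with hρdef
  have hρmeas : Measurable ρ := hBmeas.min measurable_const
  -- the assumed density coincides with `dB`
  have hdeq : ∀ x : E, (fun u : ℝ => Set.indicator (Set.Ici (0 : ℝ))
      (fun v => ENNReal.ofReal
        ((H x v : ℝ) * Real.exp (-∫ s in (0 : ℝ)..v, (H x s : ℝ)))) u) = dB x := by
    intro x; funext u
    simp only [hdBdef]
    by_cases hu : u ∈ Set.Ici (0 : ℝ)
    · rw [Set.indicator_of_mem hu, Set.indicator_of_mem hu]
      have hint : ∫ s in (0 : ℝ)..u, (H x s : ℝ) = G' x u := by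
        simp only [hG'def]
        rw [intervalIntegral.integral_of_le (Set.mem_Ici.mp hu),
          ← integral_indicator measurableSet_Ioc]
      rw [hint]
    · rw [Set.indicator_of_notMem hu, Set.indicator_of_notMem hu]
  -- A1 : the conditional distribution of `min(T,t)` is given by `ρ`
  have hA1 : ∀ᵐ x ∂ν, condDistrib T X μ x S = ρ x := by
    filter_upwards [hdens] with x hx
    haveI : IsProbabilityMeasure (condDistrib T X μ x) :=
      IsMarkovKernel.isProbabilityMeasure x
    have hxd : condDistrib T X μ x = volume.withDensity (dB x) := by
      rw [hx, hdeq x]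
    have hQ1v : condDistrib T X μ x Q1 = ∫⁻ u in Q1, dB x u := by
      rw [hxd, withDensity_apply _ hQ1]
    have hIio : condDistrib T X μ x (Set.Iio t) = ∫⁻ u in Set.Iio t, dB x u := by
      rw [hxd, withDensity_apply _ measurableSet_Iio]
    by_cases hts : t ∈ s'
    · have hSeq : S = Q1 ∪ Set.Ici t := by
        ext u
        simp only [hQ1def, hSdef, Set.mem_union, Set.mem_inter_iff, Set.mem_preimage,
          Set.mem_Iio, Set.mem_Ici]
        constructor
        · intro hu
          rcases lt_or_ge u t with h | h
          · exact Or.inl ⟨hu, h⟩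
          · exact Or.inr h
        · rintro (⟨hu, _⟩ | h)
          · exact hu
          · rw [min_eq_right h]; exact hts
      have hdisj : Disjoint Q1 (Set.Ici t) :=
        (Set.Iio_disjoint_Ici le_rfl).mono_left Set.inter_subset_right
      have hsplit : condDistrib T X μ x S
          = condDistrib T X μ x Q1 + condDistrib T X μ x (Set.Ici t) := by
        rw [hSeq, measure_union hdisj measurableSet_Ici]
      have hIci : condDistrib T X μ x (Set.Ici t)
          = 1 - condDistrib T X μ x (Set.Iio t) := by
        rw [← Set.compl_Iio, measure_compl measurableSet_Iio (measure_ne_top _ _), measure_univ]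
      have hB : B x = condDistrib T X μ x S := by
        simp only [hBdef, hcdef]
        rw [hsplit, hIci, hQ1v, hIio, Set.indicator_of_mem hts, one_mul]
      have hle1 : B x ≤ 1 := by rw [hB]; exact prob_le_one
      simp only [hρdef]
      rw [min_eq_left hle1, hB]
    · have hSeq : S = Q1 := by
        ext u
        simp only [hQ1def, hSdef, Set.mem_inter_iff, Set.mem_preimage, Set.mem_Iio]
        constructor
        · intro hu
          refine ⟨hu, ?_⟩
          by_contra hge
          rw [min_eq_right (le_of_not_gt hge)] at hu
          exact hts hu
        · exact fun hu => hu.1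
      have hB : B x = condDistrib T X μ x S := by
        simp only [hBdef, hcdef]
        rw [Set.indicator_of_notMem hts, zero_mul, add_zero, ← hQ1v, ← hSeq]
      have hle1 : B x ≤ 1 := by rw [hB]; exact prob_le_one
      simp only [hρdef]
      rw [min_eq_left hle1, hB]
  -- invariance of `ρ` under a.e. equality of paths
  have hinv : ∀ x y : E, (∀ᵐ s ∂(volume : Measure ℝ), φ y s = φ x s) → ρ y = ρ x := by
    intro x y hxy
    have hG'eq : ∀ u ∈ Set.Ico (0 : ℝ) t, G' y u = G' x u := by
      intro u hu
      rw [hG'def]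
      refine integral_congr_ae ?_
      filter_upwards [hxy] with s hs
      by_cases hmem : s ∈ Set.Ioc (0 : ℝ) u
      · rw [Set.indicator_of_mem hmem, Set.indicator_of_mem hmem]
        have hst : s ∈ Set.Ico (0 : ℝ) t := ⟨le_of_lt hmem.1, lt_of_le_of_lt hmem.2 hu.2⟩
        have hHs : H y s = H x s := by
          simp only [hφdef] at hs
          simpa [hst.1, hst.2] using hs
        rw [hHs]
      · rw [Set.indicator_of_notMem hmem, Set.indicator_of_notMem hmem]
    have hae : ∀ᵐ u ∂(volume : Measure ℝ), u ∈ Set.Iio t → dB y u = dB x u := by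
      filter_upwards [hxy] with u hu hut
      by_cases h0 : (0 : ℝ) ≤ u
      · have humem : u ∈ Set.Ico (0 : ℝ) t := ⟨h0, hut⟩
        have hHxy : H y u = H x u := by
          simp only [hφdef] at hu
          simpa [humem.1, humem.2] using hu
        simp only [hdBdef]
        rw [Set.indicator_of_mem (Set.mem_Ici.mpr h0), Set.indicator_of_mem (Set.mem_Ici.mpr h0),
          hHxy, hG'eq u humem]
      · simp only [hdBdef]
        rw [Set.indicator_of_notMem (fun hc => h0 (Set.mem_Ici.mp hc)),
          Set.indicator_of_notMem (fun hc => h0 (Set.mem_Ici.mp hc))]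
    have key : ∀ A : Set ℝ, A ⊆ Set.Iio t → MeasurableSet A →
        ∫⁻ u in A, dB y u = ∫⁻ u in A, dB x u := by
      intro A hA hAm
      refine lintegral_congr_ae ?_
      filter_upwards [ae_restrict_of_ae hae, ae_restrict_mem hAm] with u h1 h2
      exact h1 (hA h2)
    have hBB : B y = B x := by
      simp only [hBdef]
      rw [key Q1 Set.inter_subset_right hQ1, key (Set.Iio t) subset_rfl measurableSet_Iio]
    simp only [hρdef]
    rw [hBB]
  -- build an `m'`-measurable version of `ρ`
  have hpaths := paths_ae_condexpKernel (m' := m') ν φ hφj hm'eq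
  set g : E → ℝ≥0∞ := fun x => ∫⁻ y, ρ y ∂(condExpKernel ν m' x) with hgdef
  have hgm' : Measurable[m'] g := by
    have hf2 : @Measurable (E × E) ℝ≥0∞ (m'.prod mE) _ fun p : E × E => ρ p.2 :=
      hρmeas.comp (@measurable_snd E E m' mE)
    exact Measurable.lintegral_kernel_prod_right' (κ := condExpKernel ν m') hf2
  have hgle : ∀ x, g x ≤ 1 := by
    intro x
    haveI : IsProbabilityMeasure (condExpKernel ν m' x) :=
      IsMarkovKernel.isProbabilityMeasure x
    calc g x ≤ ∫⁻ _, 1 ∂(condExpKernel ν m' x) :=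
          lintegral_mono fun y => min_le_right _ _
      _ = 1 := by simp
  have hgae : ∀ᵐ x ∂ν, g x = ρ x := by
    filter_upwards [hpaths] with x hx
    haveI : IsProbabilityMeasure (condExpKernel ν m' x) :=
      IsMarkovKernel.isProbabilityMeasure x
    have hconst : ∀ᵐ y ∂(condExpKernel ν m' x), ρ y = ρ x :=
      hx.mono fun y hy => hinv x y hy
    calc g x = ∫⁻ _, ρ x ∂(condExpKernel ν m' x) := lintegral_congr_ae hconst
      _ = ρ x := by simp
  -- pass to Ω
  set ptil : Ω → ℝ := fun ω => (g (X ω)).toReal with hptildef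
  have hptm : Measurable[mst] ptil := by
    rw [hmst]
    have hXm : @Measurable Ω E (MeasurableSpace.comap X m') m' X :=
      Measurable.of_comap_le le_rfl
    exact hgm'.ennreal_toReal.comp hXm
  have hptSM : StronglyMeasurable[mst] ptil := hptm.stronglyMeasurable
  have hptamb : AEStronglyMeasurable ptil μ :=
    ((hptm.mono hm2 le_rfl).stronglyMeasurable).aestronglyMeasurable
  have hptbd : ∀ ω, ‖ptil ω‖ ≤ 1 := by
    intro ω
    simp only [hptildef]
    rw [Real.norm_eq_abs, abs_of_nonneg ENNReal.toReal_nonneg]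
    calc (g (X ω)).toReal ≤ (1 : ℝ≥0∞).toReal :=
        ENNReal.toReal_mono (by norm_num) (hgle (X ω))
      _ = 1 := by simp
  have hptint : Integrable ptil μ :=
    Integrable.mono' (integrable_const 1) hptamb (Filter.Eventually.of_forall hptbd)
  -- conditional-expectation facts
  have hmXle : MeasurableSpace.comap X mE ≤ mΩ := hX.comap_le
  have hm_le_mX : mst ≤ MeasurableSpace.comap X mE := by
    rw [hmst]; exact MeasurableSpace.comap_mono hm'le
  have hUpre : (fun ω => min (T ω) t) ⁻¹' s' = T ⁻¹' S := rfl
  have hcd : (fun ω => (condDistrib T X μ (X ω) S).toReal)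
      =ᵐ[μ] μ[Set.indicator (T ⁻¹' S) (fun _ => (1 : ℝ)) | MeasurableSpace.comap X mE] :=
    condDistrib_ae_eq_condExp hX hT hS
  have hA1' : ∀ᵐ ω ∂μ, condDistrib T X μ (X ω) S = ρ (X ω) :=
    ae_of_ae_map hX.aemeasurable hA1
  have hg' : ∀ᵐ ω ∂μ, g (X ω) = ρ (X ω) := ae_of_ae_map hX.aemeasurable hgae
  have hF1 : μ[Set.indicator (T ⁻¹' S) (fun _ => (1 : ℝ)) |
      MeasurableSpace.comap X mE] =ᵐ[μ] ptil := by
    have h1 : ptil =ᵐ[μ] fun ω => (condDistrib T X μ (X ω) S).toReal := by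
      filter_upwards [hA1', hg'] with ω h1 h2
      simp only [hptildef]
      rw [h2, h1]
    exact (h1.trans hcd).symm
  -- indicators
  set iU : Ω → ℝ := Set.indicator ((fun ω => min (T ω) t) ⁻¹' s') (fun _ => (1 : ℝ)) with hiUdef
  set iX : Ω → ℝ := Set.indicator (X ⁻¹' τ) (fun _ => (1 : ℝ)) with hiXdef
  have hprod : Set.indicator ((fun ω => min (T ω) t) ⁻¹' s' ∩ X ⁻¹' τ) (fun _ => (1 : ℝ))
      = fun ω => iX ω * iU ω := by
    funext ω
    by_cases h1 : ω ∈ (fun ω => min (T ω) t) ⁻¹' s' <;>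
      by_cases h2 : ω ∈ X ⁻¹' τ <;>
        simp [hiUdef, hiXdef, Set.indicator_apply, h1, h2]
  have hτmX : MeasurableSet[MeasurableSpace.comap X mE] (X ⁻¹' τ) := ⟨τ, hτ, rfl⟩
  have hiX_SM : StronglyMeasurable[MeasurableSpace.comap X mE] iX :=
    stronglyMeasurable_const.indicator hτmX
  have hiU_int : Integrable iU μ :=
    (integrable_const 1).indicator ((hT.min measurable_const) hs')
  have hiX_int : Integrable iX μ := (integrable_const 1).indicator (hX hτ)
  have hXU_int : Integrable (fun ω => iX ω * iU ω) μ := by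
    rw [← hprod]
    exact (integrable_const 1).indicator (((hT.min measurable_const) hs').inter (hX hτ))
  have hiU_F1 : μ[iU | MeasurableSpace.comap X mE] =ᵐ[μ] ptil := by
    rw [hiUdef, hUpre]
    exact hF1
  have step1 : μ[fun ω => iX ω * iU ω | MeasurableSpace.comap X mE]
      =ᵐ[μ] fun ω => iX ω * ptil ω := by
    have hmul := condExp_mul_of_stronglyMeasurable_left hiX_SM hXU_int hiU_int
    refine hmul.trans ?_
    filter_upwards [hiU_F1] with ω hω
    simp only [Pi.mul_apply]
    rw [hω]
  have hLHS : μ[fun ω => iX ω * iU ω | mst]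
      =ᵐ[μ] fun ω => ptil ω * (μ[iX | mst]) ω := by
    have hpt_iX_int : Integrable (fun ω => ptil ω * iX ω) μ :=
      Integrable.bdd_mul (c := 1) hiX_int hptamb (Filter.Eventually.of_forall hptbd)
    calc μ[fun ω => iX ω * iU ω | mst]
        =ᵐ[μ] μ[μ[fun ω => iX ω * iU ω | MeasurableSpace.comap X mE] | mst] :=
          (condExp_condExp_of_le hm_le_mX hmXle).symm
      _ =ᵐ[μ] μ[fun ω => iX ω * ptil ω | mst] := condExp_congr_ae step1
      _ =ᵐ[μ] μ[fun ω => ptil ω * iX ω | mst] := by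
          rw [show (fun ω => iX ω * ptil ω) = fun ω => ptil ω * iX ω from
            funext fun ω => mul_comm _ _]
      _ =ᵐ[μ] fun ω => ptil ω * (μ[iX | mst]) ω :=
          condExp_mul_of_stronglyMeasurable_left hptSM hpt_iX_int hiX_int
  have hRHS : μ[iU | mst] =ᵐ[μ] ptil := by
    calc μ[iU | mst]
        =ᵐ[μ] μ[μ[iU | MeasurableSpace.comap X mE] | mst] :=
          (condExp_condExp_of_le hm_le_mX hmXle).symm
      _ =ᵐ[μ] μ[ptil | mst] := condExp_congr_ae hiU_F1
      _ =ᵐ[μ] ptil := by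
          rw [condExp_of_stronglyMeasurable hm2 hptSM hptint]
  -- assemble
  have hgoalLHS : μ[Set.indicator ((fun ω => min (T ω) t) ⁻¹' s' ∩ X ⁻¹' τ) (fun _ => (1 : ℝ)) |
      mst] =ᵐ[μ] fun ω => ptil ω * (μ[iX | mst]) ω := by
    rw [hprod]
    exact hLHS
  refine hgoalLHS.trans ?_
  filter_upwards [hRHS] with ω hω
  rw [← hω]

end Aux

/-- Proposition 2: if the regular conditional distribution of the treatment time `T` given the
covariate history `X` has hazard function `H (X ω)`, then for every `t ∈ [0, L)` the restricted
treatment time `U_t = min (T, t)` is conditionally independent of `X` given the σ-algebra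
generated by the propensity process `Θ_t` up to time `t`. -/
theorem condIndepFun_min_given_propensityProcess_upto
    {Ω E : Type*}
    [MeasurableSpace Ω] [StandardBorelSpace Ω] [Nonempty Ω]
    [MeasurableSpace E] [StandardBorelSpace E]
    (μ : Measure Ω) [IsProbabilityMeasure μ]
    (T : Ω → ℝ) (X : Ω → E) (hT : Measurable T) (hX : Measurable X)
    (L : ℝ) (hL : 0 < L)
    (H : E → ℝ → NNReal) (hH : Measurable fun p : E × ℝ => H p.1 p.2)
    (hdens : ∀ᵐ x ∂(μ.map X), condDistrib T X μ x =
      volume.withDensity fun u : ℝ =>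
        Set.indicator (Set.Ici (0 : ℝ))
          (fun v => ENNReal.ofReal
            ((H x v : ℝ) * Real.exp (-∫ s in (0 : ℝ)..v, (H x s : ℝ)))) u) :
    ∀ t ∈ Set.Ico (0 : ℝ) L,
      CondIndepFun
        (MeasurableSpace.comap
          (fun ω => fun s : ℝ => if s ∈ Set.Ico (0 : ℝ) t then H (X ω) s else 0) inferInstance)
        (Measurable.comap_le (measurable_pi_lambda _ (fun s => by
          by_cases hs : s ∈ Set.Ico (0 : ℝ) t
          · simp only [if_pos hs]
            exact hH.comp (hX.prodMk measurable_const)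
          · simp only [if_neg hs]
            exact measurable_const)))
        (fun ω => min (T ω) t) X μ := by
  intro t ht
  exact helper μ T X hT hX t H hH hdens rfl
    (MeasurableSpace.comap_comp
      (f := fun x => fun s : ℝ => if s ∈ Set.Ico (0 : ℝ) t then H x s else 0)
      (g := X)).symm _
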